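/- arXiv:1408.3552 — 6 statements merged into one kernel-verified Lean document; each statement's English description precedes it below -/
import Mathlib

section
/- Let w : ℝ → ℝ be twice continuously differentiable with compact support and let φ : ℝ → ℝ be three times continuously differentiable with φ'(x) ≥ 0 for all x and |φ'''(x)| ≤ C for all x, where C ≥ 0. Then ∫_ℝ w'(x) (φ w)''(x) dx ≥ −(C/2) ∫_ℝ w(x)² dx. -/
open MeasureTheory

private lemma cts_int (f g : ℝ → ℝ) (hf : Continuous f) (hg : Continuous g)
    (hgs : HasCompactSupport g) : Integrable (fun x => f x * g x) :=
  (hf.mul hg).integrable_of_hasCompactSupport hgs.mul_left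

private lemma my_ibp (f g : ℝ → ℝ) (hf : Differentiable ℝ f) (hf' : Continuous (deriv f))
    (hg : Differentiable ℝ g) (hg' : Continuous (deriv g)) (hgs : HasCompactSupport g) :
    ∫ x : ℝ, f x * deriv g x = - ∫ x : ℝ, deriv f x * g x := by
  have h1 : Integrable (f * deriv g) := cts_int f (deriv g) hf.continuous hg' hgs.deriv
  have h2 : Integrable (deriv f * g) := cts_int (deriv f) g hf' hg.continuous hgs
  have h3 : Integrable (f * g) := cts_int f g hf.continuous hg.continuous hgs
  exact integral_mul_deriv_eq_deriv_mul_of_integrable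
    (fun x _ => (hf x).hasDerivAt) (fun x _ => (hg x).hasDerivAt) h1 h2 h3

/-- If `w` is C² with compact support, `φ` is C³ with `φ' ≥ 0` and `|φ'''| ≤ C` (with `C ≥ 0`),
then `∫ w' (φ w)'' ≥ −(C/2) ∫ w²`. -/
theorem integral_deriv_mul_deriv_deriv_weight_lower_bound
    (w φ : ℝ → ℝ) (C : ℝ) (hC : 0 ≤ C)
    (hw : ContDiff ℝ 2 w) (hwsupp : HasCompactSupport w)
    (hφ : ContDiff ℝ 3 φ)
    (hφ' : ∀ x, 0 ≤ deriv φ x)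
    (hφ''' : ∀ x, |deriv (deriv (deriv φ)) x| ≤ C) :
    ∫ x : ℝ, deriv w x * deriv (deriv (fun y => φ y * w y)) x
      ≥ -(C / 2) * ∫ x : ℝ, (w x) ^ 2 := by
  -- regularity of w
  obtain ⟨hwd, -, hw1⟩ := contDiff_succ_iff_deriv.mp (show ContDiff ℝ (1+1) w from by norm_num [hw])
  obtain ⟨hwd', hwc''⟩ := contDiff_one_iff_deriv.mp hw1
  -- regularity of φ
  obtain ⟨hφd, -, hφ2⟩ :=
    contDiff_succ_iff_deriv.mp (show ContDiff ℝ (2+1) φ from by norm_num [hφ])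
  obtain ⟨hφd', -, hφ1⟩ := contDiff_succ_iff_deriv.mp
    (show ContDiff ℝ (1+1) (deriv φ) from by norm_num [hφ2])
  obtain ⟨hφd'', hφc'''⟩ := contDiff_one_iff_deriv.mp hφ1
  -- pointwise second derivative of φ * w
  have hkey : ∀ x, deriv (deriv (fun y => φ y * w y)) x
      = deriv (deriv φ) x * w x + 2 * (deriv φ x * deriv w x) + φ x * deriv (deriv w) x := by
    intro x
    have h1 : deriv (fun y => φ y * w y) = fun y => deriv φ y * w y + φ y * deriv w y := by
      funext y
      exact deriv_mul (hφd y) (hwd y)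
    rw [h1]
    rw [deriv_fun_add (show DifferentiableAt ℝ (fun y => deriv φ y * w y) x from (hφd'.mul hwd).differentiableAt)
        (show DifferentiableAt ℝ (fun y => φ y * deriv w y) x from (hφd.mul hwd').differentiableAt),
      deriv_fun_mul (hφd' x) (hwd x), deriv_fun_mul (hφd x) (hwd' x)]
    ring
  -- auxiliary squared functions
  set g1 : ℝ → ℝ := fun x => (w x) ^ 2 / 2 with hg1def
  set g2 : ℝ → ℝ := fun x => (deriv w x) ^ 2 / 2 with hg2def
  have hg1d : Differentiable ℝ g1 := (hwd.pow 2).div_const 2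
  have hg2d : Differentiable ℝ g2 := (hwd'.pow 2).div_const 2
  have hg1' : ∀ x, deriv g1 x = w x * deriv w x := by
    intro x
    rw [hg1def, deriv_div_const, deriv_fun_pow (hwd x) 2]
    ring
  have hg2' : ∀ x, deriv g2 x = deriv w x * deriv (deriv w) x := by
    intro x
    rw [hg2def, deriv_div_const, deriv_fun_pow (hwd' x) 2]
    ring
  have hg1s : HasCompactSupport g1 :=
    hwsupp.comp_left (g := fun t : ℝ => t ^ 2 / 2) (by norm_num)
  have hg2s : HasCompactSupport g2 :=
    hwsupp.deriv.comp_left (g := fun t : ℝ => t ^ 2 / 2) (by norm_num)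
  have hg1c' : Continuous (deriv g1) := by
    have : deriv g1 = fun x => w x * deriv w x := funext hg1'
    rw [this]; exact hwd.continuous.mul hwd'.continuous
  have hg2c' : Continuous (deriv g2) := by
    have : deriv g2 = fun x => deriv w x * deriv (deriv w) x := funext hg2'
    rw [this]; exact hwd'.continuous.mul hwc''
  -- the three integrability facts
  have hI1 : Integrable (fun x => deriv (deriv φ) x * deriv g1 x) :=
    cts_int _ _ hφd''.continuous hg1c' (hg1s.deriv)
  have hI2 : Integrable (fun x => 2 * (deriv φ x * deriv w x ^ 2)) := by
    have := cts_int (fun x => 2 * deriv φ x) (fun x => deriv w x ^ 2)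
      (continuous_const.mul hφd'.continuous) (hwd'.continuous.pow 2)
      (hwsupp.deriv.comp_left (g := fun t : ℝ => t ^ 2) (by norm_num))
    exact this.congr (by filter_upwards with x; ring)
  have hI3 : Integrable (fun x => φ x * deriv g2 x) :=
    cts_int _ _ hφd.continuous hg2c' (hg2s.deriv)
  -- rewrite the integrand
  have hsplit : (∫ x : ℝ, deriv w x * deriv (deriv (fun y => φ y * w y)) x)
      = (∫ x : ℝ, deriv (deriv φ) x * deriv g1 x)
        + ((∫ x : ℝ, 2 * (deriv φ x * deriv w x ^ 2)) + ∫ x : ℝ, φ x * deriv g2 x) := by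
    have heq : (fun x : ℝ => deriv w x * deriv (deriv (fun y => φ y * w y)) x)
        = fun x => deriv (deriv φ) x * deriv g1 x
          + (2 * (deriv φ x * deriv w x ^ 2) + φ x * deriv g2 x) := by
      funext x
      rw [hkey x, hg1' x, hg2' x]
      ring
    have h4 := integral_add hI1 (hI2.add hI3)
    simp only [Pi.add_apply] at h4
    rw [heq, h4, integral_add hI2 hI3]
  -- integration by parts
  have hper1 : (∫ x : ℝ, deriv (deriv φ) x * deriv g1 x)
      = - ∫ x : ℝ, deriv (deriv (deriv φ)) x * g1 x :=
    my_ibp _ _ hφd'' hφc''' hg1d hg1c' hg1s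
  have hper3 : (∫ x : ℝ, φ x * deriv g2 x) = - ∫ x : ℝ, deriv φ x * g2 x :=
    my_ibp _ _ hφd hφd'.continuous hg2d hg2c' hg2s
  rw [hsplit, hper1, hper3]
  -- positivity of the middle terms
  have hmid : 0 ≤ (∫ x : ℝ, 2 * (deriv φ x * deriv w x ^ 2)) + - ∫ x : ℝ, deriv φ x * g2 x := by
    have h2 : (∫ x : ℝ, deriv φ x * g2 x) ≤ ∫ x : ℝ, 2 * (deriv φ x * deriv w x ^ 2) := by
      apply integral_mono (cts_int (deriv φ) (fun x => deriv w x ^ 2 / 2) hφd'.continuous (hwd'.continuous.pow 2 |>.div_const 2)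
        (hwsupp.deriv.comp_left (g := fun t : ℝ => t ^ 2 / 2) (by norm_num))) hI2
      intro x
      have h0 : 0 ≤ deriv φ x * deriv w x ^ 2 := mul_nonneg (hφ' x) (sq_nonneg _)
      simp only [hg2def]
      nlinarith
    linarith
  -- bound the φ''' term
  have hbnd : (∫ x : ℝ, deriv (deriv (deriv φ)) x * g1 x) ≤ (C / 2) * ∫ x : ℝ, (w x) ^ 2 := by
    have hiC : Integrable (fun x => C * (w x ^ 2 / 2)) :=
      cts_int (fun _ => C) g1 continuous_const (hwd.continuous.pow 2 |>.div_const 2) hg1s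
    have h1 : (∫ x : ℝ, deriv (deriv (deriv φ)) x * g1 x) ≤ ∫ x : ℝ, C * (w x ^ 2 / 2) := by
      apply integral_mono (cts_int _ _ hφc''' (hwd.continuous.pow 2 |>.div_const 2) hg1s) hiC
      intro x
      have h0 : 0 ≤ w x ^ 2 / 2 := by positivity
      have := (abs_le.mp (hφ''' x)).2
      simp only [hg1def, Pi.pow_apply]
      nlinarith
    calc (∫ x : ℝ, deriv (deriv (deriv φ)) x * g1 x) ≤ ∫ x : ℝ, C * (w x ^ 2 / 2) := h1
      _ = (C / 2) * ∫ x : ℝ, (w x) ^ 2 := by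
        rw [integral_const_mul, integral_div]
        ring
  linarith
end

section
/- Let u : ℝ → ℝ be continuously differentiable with compact support and let φ : ℝ → ℝ be twice continuously differentiable with φ'(x) ≥ 0 for all x. Then for every x ∈ ℝ, u(x)² φ'(x) ≤ 2 (∫_ℝ (u'(t))² φ'(t) dt)^{1/2} (∫_ℝ u(t)² φ'(t) dt)^{1/2} + ∫_ℝ u(t)² |φ''(t)| dt. -/
open MeasureTheory

/-- Helper: compact support transfer. -/
lemma supp_transfer {u f : ℝ → ℝ} (hu : HasCompactSupport u)
    (h : ∀ t, u t = 0 → f t = 0) : HasCompactSupport f :=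
  hu.mono fun t ht => by
    simp only [Function.mem_support] at ht ⊢
    exact fun h0 => ht (h t h0)

/-- Cauchy–Schwarz for real integrals, in square-root form. -/
lemma cs_sqrt (f g : ℝ → ℝ)
    (hf2 : Integrable (fun t => f t ^ 2)) (hg2 : Integrable (fun t => g t ^ 2))
    (hfg : Integrable (fun t => f t * g t)) :
    ∫ t : ℝ, f t * g t ≤ Real.sqrt (∫ t : ℝ, f t ^ 2) * Real.sqrt (∫ t : ℝ, g t ^ 2) := by
  set A := ∫ t : ℝ, f t ^ 2 with hA
  set C := ∫ t : ℝ, g t ^ 2 with hC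
  set B := ∫ t : ℝ, f t * g t with hB
  have hA0 : 0 ≤ A := integral_nonneg fun t => sq_nonneg _
  have hC0 : 0 ≤ C := integral_nonneg fun t => sq_nonneg _
  have key : B ^ 2 ≤ A * C := by
    have h : ∀ lam : ℝ, 0 ≤ C * (lam * lam) + (-2 * B) * lam + A := by
      intro lam
      have hnn : 0 ≤ ∫ t : ℝ, (f t - lam * g t) ^ 2 :=
        integral_nonneg fun t => sq_nonneg _
      have i1 : Integrable (fun t => f t ^ 2 - 2 * lam * (f t * g t)) :=
        hf2.sub (hfg.const_mul _)
      have i2 : Integrable (fun t => lam ^ 2 * g t ^ 2) := hg2.const_mul _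
      have hexp : (∫ t : ℝ, (f t - lam * g t) ^ 2)
          = A - 2 * lam * B + lam ^ 2 * C := by
        have e : (fun t => (f t - lam * g t) ^ 2)
            = fun t => (f t ^ 2 - 2 * lam * (f t * g t)) + lam ^ 2 * g t ^ 2 := by
          funext t; ring
        rw [e, integral_add i1 i2, integral_sub hf2 (hfg.const_mul _),
          integral_const_mul, integral_const_mul]
      nlinarith [hnn, hexp]
    have := discrim_le_zero h
    rw [discrim] at this
    nlinarith
  calc B ≤ |B| := le_abs_self _
    _ = Real.sqrt (B ^ 2) := (Real.sqrt_sq_eq_abs B).symm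
    _ ≤ Real.sqrt (A * C) := Real.sqrt_le_sqrt key
    _ = Real.sqrt A * Real.sqrt C := Real.sqrt_mul hA0 _

/-- Weighted supremum estimate: for `u` C¹ with compact support and `φ` C² with `φ' ≥ 0`,
`u(x)² φ'(x) ≤ 2 (∫ (u')² φ')^{1/2} (∫ u² φ')^{1/2} + ∫ u² |φ''|`. -/
theorem weighted_sup_estimate
    (u φ : ℝ → ℝ) (hu : ContDiff ℝ 1 u) (husupp : HasCompactSupport u)
    (hφ : ContDiff ℝ 2 φ) (hφ' : ∀ x, 0 ≤ deriv φ x) (x : ℝ) :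
    (u x) ^ 2 * deriv φ x
      ≤ 2 * Real.sqrt (∫ t : ℝ, (deriv u t) ^ 2 * deriv φ t)
          * Real.sqrt (∫ t : ℝ, (u t) ^ 2 * deriv φ t)
        + ∫ t : ℝ, (u t) ^ 2 * |deriv (deriv φ) t| := by
  have h2 : (2 : WithTop ℕ∞) = 1 + 1 := by norm_num
  have hφ1 : ContDiff ℝ 1 (deriv φ) := (contDiff_succ_iff_deriv.mp (h2 ▸ hφ)).2.2
  have hucont : Continuous u := hu.continuous
  have hu'cont : Continuous (deriv u) := hu.continuous_deriv le_rfl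
  have hφ'cont : Continuous (deriv φ) := hφ1.continuous
  have hφ''cont : Continuous (deriv (deriv φ)) := hφ1.continuous_deriv le_rfl
  have hudiff : Differentiable ℝ u := hu.differentiable one_ne_zero
  have hφ'diff : Differentiable ℝ (deriv φ) := hφ1.differentiable one_ne_zero
  set g : ℝ → ℝ := fun t => u t ^ 2 * deriv φ t with hgdef
  have hgC1 : ContDiff ℝ 1 g := (hu.pow 2).mul hφ1
  have hgsupp : HasCompactSupport g :=
    supp_transfer husupp fun t h0 => by simp [hgdef, h0]
  have hderiv : ∀ t, deriv g t
      = 2 * u t * deriv u t * deriv φ t + u t ^ 2 * deriv (deriv φ) t := by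
    intro t
    have h1 : HasDerivAt u (deriv u t) t := (hudiff t).hasDerivAt
    have hb : HasDerivAt (deriv φ) (deriv (deriv φ) t) t := (hφ'diff t).hasDerivAt
    have h3 : HasDerivAt (fun s => u s ^ 2) (2 * u t * deriv u t) t := by
      have := h1.pow 2
      norm_num at this
      exact this
    have h4 : HasDerivAt g
        (2 * u t * deriv u t * deriv φ t + u t ^ 2 * deriv (deriv φ) t) t := by
      have := h3.mul hb
      exact this
    exact h4.deriv
  have hftc : ∫ t in Set.Iic x, deriv g t = g x :=
    hgsupp.integral_Iic_deriv_eq hgC1 x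
  have hg'cont : Continuous (deriv g) := by
    have e : (deriv g)
        = fun t => 2 * u t * deriv u t * deriv φ t + u t ^ 2 * deriv (deriv φ) t := by
      funext t; exact hderiv t
    rw [e]; fun_prop
  have hg'int : Integrable (deriv g) :=
    hg'cont.integrable_of_hasCompactSupport hgsupp.deriv
  have habs_int : Integrable (fun t => |deriv g t|) := hg'int.abs
  have hterm1_int : Integrable (fun t => 2 * (|u t| * |deriv u t|) * deriv φ t) :=
    Continuous.integrable_of_hasCompactSupport (by fun_prop)
      (supp_transfer husupp fun t h0 => by simp [h0])
  have hterm2_int : Integrable (fun t => u t ^ 2 * |deriv (deriv φ) t|) :=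
    Continuous.integrable_of_hasCompactSupport (by fun_prop)
      (supp_transfer husupp fun t h0 => by simp [h0])
  have hmaj_int : Integrable
      (fun t => 2 * (|u t| * |deriv u t|) * deriv φ t + u t ^ 2 * |deriv (deriv φ) t|) :=
    hterm1_int.add hterm2_int
  have step1 : g x ≤ ∫ t : ℝ, |deriv g t| := by
    rw [← hftc]
    calc ∫ t in Set.Iic x, deriv g t ≤ ∫ t in Set.Iic x, |deriv g t| :=
          setIntegral_mono_on hg'int.integrableOn habs_int.integrableOn
            measurableSet_Iic (fun t _ => le_abs_self _)
      _ ≤ ∫ t : ℝ, |deriv g t| :=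
          setIntegral_le_integral habs_int (Filter.Eventually.of_forall fun t => abs_nonneg _)
  have step2 : (∫ t : ℝ, |deriv g t|)
      ≤ ∫ t : ℝ, (2 * (|u t| * |deriv u t|) * deriv φ t + u t ^ 2 * |deriv (deriv φ) t|) := by
    apply integral_mono habs_int hmaj_int
    intro t
    show |deriv g t| ≤ _
    rw [hderiv t]
    calc |2 * u t * deriv u t * deriv φ t + u t ^ 2 * deriv (deriv φ) t|
        ≤ |2 * u t * deriv u t * deriv φ t| + |u t ^ 2 * deriv (deriv φ) t| := abs_add_le _ _
      _ = 2 * (|u t| * |deriv u t|) * deriv φ t + u t ^ 2 * |deriv (deriv φ) t| := by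
          rw [abs_mul, abs_mul, abs_mul, abs_mul, abs_of_nonneg (hφ' t), abs_two,
            abs_pow, sq_abs]
          ring
  have hsplit : (∫ t : ℝ, (2 * (|u t| * |deriv u t|) * deriv φ t + u t ^ 2 * |deriv (deriv φ) t|))
      = (∫ t : ℝ, 2 * (|u t| * |deriv u t|) * deriv φ t)
        + ∫ t : ℝ, u t ^ 2 * |deriv (deriv φ) t| :=
    integral_add hterm1_int hterm2_int
  set F : ℝ → ℝ := fun t => |deriv u t| * Real.sqrt (deriv φ t) with hF
  set G : ℝ → ℝ := fun t => |u t| * Real.sqrt (deriv φ t) with hG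
  have hFG : ∀ t, F t * G t = |u t| * |deriv u t| * deriv φ t := by
    intro t
    simp only [hF, hG]
    rw [show |deriv u t| * Real.sqrt (deriv φ t) * (|u t| * Real.sqrt (deriv φ t))
      = |u t| * |deriv u t| * (Real.sqrt (deriv φ t) * Real.sqrt (deriv φ t)) by ring,
      Real.mul_self_sqrt (hφ' t)]
  have hF2 : ∀ t, F t ^ 2 = deriv u t ^ 2 * deriv φ t := by
    intro t; simp only [hF, mul_pow, sq_abs, Real.sq_sqrt (hφ' t)]
  have hG2 : ∀ t, G t ^ 2 = u t ^ 2 * deriv φ t := by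
    intro t; simp only [hG, mul_pow, sq_abs, Real.sq_sqrt (hφ' t)]
  have hF2int : Integrable (fun t => F t ^ 2) := by
    have e : (fun t => F t ^ 2) = fun t => deriv u t ^ 2 * deriv φ t := funext hF2
    rw [e]
    exact Continuous.integrable_of_hasCompactSupport (by fun_prop)
      (supp_transfer husupp.deriv fun t h0 => by simp [h0])
  have hG2int : Integrable (fun t => G t ^ 2) := by
    have e : (fun t => G t ^ 2) = fun t => u t ^ 2 * deriv φ t := funext hG2
    rw [e]
    exact Continuous.integrable_of_hasCompactSupport (by fun_prop)
      (supp_transfer husupp fun t h0 => by simp [h0])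
  have hFGint : Integrable (fun t => F t * G t) := by
    have e : (fun t => F t * G t) = fun t => |u t| * |deriv u t| * deriv φ t := funext hFG
    rw [e]
    exact Continuous.integrable_of_hasCompactSupport (by fun_prop)
      (supp_transfer husupp fun t h0 => by simp [h0])
  have hCS : (∫ t : ℝ, F t * G t)
      ≤ Real.sqrt (∫ t : ℝ, F t ^ 2) * Real.sqrt (∫ t : ℝ, G t ^ 2) :=
    cs_sqrt F G hF2int hG2int hFGint
  have hT1 : (∫ t : ℝ, 2 * (|u t| * |deriv u t|) * deriv φ t)
      ≤ 2 * Real.sqrt (∫ t : ℝ, (deriv u t) ^ 2 * deriv φ t)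
        * Real.sqrt (∫ t : ℝ, (u t) ^ 2 * deriv φ t) := by
    have he : (fun t : ℝ => 2 * (|u t| * |deriv u t|) * deriv φ t)
        = fun t => 2 * (F t * G t) := by
      funext t; rw [hFG t]; ring
    rw [he, integral_const_mul]
    have hf2eq : (∫ t : ℝ, F t ^ 2) = ∫ t : ℝ, (deriv u t) ^ 2 * deriv φ t :=
      integral_congr_ae (Filter.Eventually.of_forall hF2)
    have hg2eq : (∫ t : ℝ, G t ^ 2) = ∫ t : ℝ, (u t) ^ 2 * deriv φ t :=
      integral_congr_ae (Filter.Eventually.of_forall hG2)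
    rw [← hf2eq, ← hg2eq, mul_assoc]
    linarith [hCS]
  calc (u x) ^ 2 * deriv φ x = g x := rfl
    _ ≤ ∫ t : ℝ, |deriv g t| := step1
    _ ≤ ∫ t : ℝ, (2 * (|u t| * |deriv u t|) * deriv φ t + u t ^ 2 * |deriv (deriv φ) t|) := step2
    _ = (∫ t : ℝ, 2 * (|u t| * |deriv u t|) * deriv φ t)
        + ∫ t : ℝ, u t ^ 2 * |deriv (deriv φ) t| := hsplit
    _ ≤ 2 * Real.sqrt (∫ t : ℝ, (deriv u t) ^ 2 * deriv φ t)
          * Real.sqrt (∫ t : ℝ, (u t) ^ 2 * deriv φ t)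
        + ∫ t : ℝ, (u t) ^ 2 * |deriv (deriv φ) t| := add_le_add_left hT1 _
end

section
/- There exists an absolute constant C > 0 with the following property: for every δ > 0, every continuously differentiable u : ℝ → ℝ with compact support, and every twice continuously differentiable φ : ℝ → ℝ with φ'(x) ≥ 0 for all x, one has ∫_ℝ u³ φ' dx ≤ δ ∫_ℝ (u')² φ' dx + C δ^{−1/3} (∫_ℝ u² φ' dx)^{1/3} (∫_ℝ u² √(φ') dx)^{4/3} + (∫_ℝ u² |φ''| dx)^{1/2} ∫_ℝ u² √(φ') dx. -/
open MeasureTheory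

lemma aux_sqrt_add (a b : ℝ) (ha : 0 ≤ a) (hb : 0 ≤ b) :
    Real.sqrt (a + b) ≤ Real.sqrt a + Real.sqrt b := by
  have h1 := Real.sq_sqrt ha
  have h2 := Real.sq_sqrt hb
  have h3 := Real.sqrt_nonneg a
  have h4 := Real.sqrt_nonneg b
  calc Real.sqrt (a + b) ≤ Real.sqrt ((Real.sqrt a + Real.sqrt b) ^ 2) :=
        Real.sqrt_le_sqrt (by nlinarith)
    _ = Real.sqrt a + Real.sqrt b := Real.sqrt_sq (by positivity)

lemma aux_young (a b δ : ℝ) (ha : 0 ≤ a) (hb : 0 ≤ b) (hδ : 0 < δ) :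
    Real.sqrt 2 * a ^ ((1:ℝ)/4) * b ≤ δ * a + δ ^ (-(1/3 : ℝ)) * b ^ ((4:ℝ)/3) := by
  have h4δ : (0:ℝ) < 4 * δ := by linarith
  set x := (4*δ) ^ ((1:ℝ)/4) * a ^ ((1:ℝ)/4) with hxdef
  set y := Real.sqrt 2 * (4*δ) ^ (-(1/4 : ℝ)) * b with hydef
  have hx : 0 ≤ x := by positivity
  have hy : 0 ≤ y := by positivity
  have hpq : Real.HolderConjugate 4 (4/3) := Real.holderConjugate_iff.mpr ⟨by norm_num, by norm_num⟩
  have hxy : Real.sqrt 2 * a ^ ((1:ℝ)/4) * b = x * y := by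
    have h1 : (4*δ) ^ ((1:ℝ)/4) * (4*δ) ^ (-(1/4 : ℝ)) = 1 := by
      rw [← Real.rpow_add h4δ]; norm_num
    calc Real.sqrt 2 * a ^ ((1:ℝ)/4) * b
        = ((4*δ) ^ ((1:ℝ)/4) * (4*δ) ^ (-(1/4 : ℝ))) * (Real.sqrt 2 * a ^ ((1:ℝ)/4) * b) := by
          rw [h1, one_mul]
      _ = x * y := by rw [hxdef, hydef]; ring
  have hx4 : x ^ (4:ℝ) / 4 = δ * a := by
    rw [hxdef, Real.mul_rpow (by positivity) (by positivity),
      ← Real.rpow_mul h4δ.le, ← Real.rpow_mul ha]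
    norm_num
    ring
  have hy43 : y ^ ((4:ℝ)/3) / (4/3) ≤ δ ^ (-(1/3 : ℝ)) * b ^ ((4:ℝ)/3) := by
    have e1 : y ^ ((4:ℝ)/3)
        = (Real.sqrt 2) ^ ((4:ℝ)/3) * ((4*δ) ^ (-(1/4 : ℝ))) ^ ((4:ℝ)/3) * b ^ ((4:ℝ)/3) := by
      rw [hydef, Real.mul_rpow (by positivity) hb, Real.mul_rpow (by positivity) (by positivity)]
    have e2 : (Real.sqrt 2) ^ ((4:ℝ)/3) = (2:ℝ) ^ ((2:ℝ)/3) := by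
      rw [Real.sqrt_eq_rpow, ← Real.rpow_mul (by norm_num)]
      norm_num
    have e3 : ((4*δ) ^ (-(1/4 : ℝ))) ^ ((4:ℝ)/3) = (4:ℝ) ^ (-(1/3 : ℝ)) * δ ^ (-(1/3 : ℝ)) := by
      rw [← Real.rpow_mul h4δ.le, show (-(1/4 : ℝ)) * ((4:ℝ)/3) = -(1/3 : ℝ) by norm_num,
        Real.mul_rpow (by norm_num) hδ.le]
    have e4 : (2:ℝ) ^ ((2:ℝ)/3) * (4:ℝ) ^ (-(1/3 : ℝ)) = 1 := by
      rw [show (4:ℝ) = (2:ℝ) ^ (2:ℝ) by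
          rw [show (2:ℝ) = ((2:ℕ):ℝ) from by norm_num, Real.rpow_natCast]; norm_num,
        ← Real.rpow_mul (by norm_num), ← Real.rpow_add (by norm_num)]
      norm_num
    have hbp : (0:ℝ) ≤ b ^ ((4:ℝ)/3) := Real.rpow_nonneg hb _
    have hδp : (0:ℝ) ≤ δ ^ (-(1/3 : ℝ)) := Real.rpow_nonneg hδ.le _
    calc y ^ ((4:ℝ)/3) / (4/3)
        = (3/4) * ((2:ℝ) ^ ((2:ℝ)/3) * (4:ℝ) ^ (-(1/3 : ℝ))) * (δ ^ (-(1/3 : ℝ)) * b ^ ((4:ℝ)/3)) := by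
          rw [e1, e2, e3]; ring
      _ = (3/4) * (δ ^ (-(1/3 : ℝ)) * b ^ ((4:ℝ)/3)) := by rw [e4]; ring
      _ ≤ δ ^ (-(1/3 : ℝ)) * b ^ ((4:ℝ)/3) := by nlinarith [mul_nonneg hδp hbp]
  calc Real.sqrt 2 * a ^ ((1:ℝ)/4) * b = x * y := hxy
    _ ≤ x ^ (4:ℝ) / 4 + y ^ ((4:ℝ)/3) / (4/3) := Real.young_inequality_of_nonneg hx hy hpq
    _ ≤ δ * a + δ ^ (-(1/3 : ℝ)) * b ^ ((4:ℝ)/3) := by rw [hx4]; linarith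

/-- Estimate for the cubic weighted term: there is an absolute constant `C > 0` such that for
every `δ > 0`, every C¹ compactly supported `u` and every C² weight `φ` with `φ' ≥ 0`,
`∫ u³ φ' ≤ δ ∫ (u')² φ' + C δ^{−1/3} (∫ u² φ')^{1/3} (∫ u² √(φ'))^{4/3}
  + (∫ u² |φ''|)^{1/2} ∫ u² √(φ')`. -/
theorem cubic_term_estimate :
    ∃ C : ℝ, 0 < C ∧
      ∀ (δ : ℝ), 0 < δ →
        ∀ (u φ : ℝ → ℝ), ContDiff ℝ 1 u → HasCompactSupport u →
          ContDiff ℝ 2 φ → (∀ x, 0 ≤ deriv φ x) →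
          (∫ x : ℝ, (u x) ^ 3 * deriv φ x)
            ≤ δ * (∫ x : ℝ, (deriv u x) ^ 2 * deriv φ x)
              + C * δ ^ (-(1 / 3 : ℝ))
                * (∫ x : ℝ, (u x) ^ 2 * deriv φ x) ^ ((1 : ℝ) / 3)
                * (∫ x : ℝ, (u x) ^ 2 * Real.sqrt (deriv φ x)) ^ ((4 : ℝ) / 3)
              + (∫ x : ℝ, (u x) ^ 2 * |deriv (deriv φ) x|) ^ ((1 : ℝ) / 2)
                * ∫ x : ℝ, (u x) ^ 2 * Real.sqrt (deriv φ x) := by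
  refine ⟨1, one_pos, ?_⟩
  intro δ hδ u φ hu hsupp hφ hφ'
  -- basic regularity
  have hu_c : Continuous u := hu.continuous
  have hud : Differentiable ℝ u := hu.differentiable one_ne_zero
  have hu'_c : Continuous (deriv u) := hu.continuous_deriv le_rfl
  have hφ1 : ContDiff ℝ 1 (deriv φ) :=
    ((contDiff_succ_iff_deriv (n := 1)).mp (by exact_mod_cast hφ)).2.2
  have hφ'_c : Continuous (deriv φ) := hφ1.continuous
  have hφ'd : Differentiable ℝ (deriv φ) := hφ1.differentiable one_ne_zero
  have hφ''_c : Continuous (deriv (deriv φ)) := hφ1.continuous_deriv le_rfl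
  have hsφ'_c : Continuous (fun x => Real.sqrt (deriv φ x)) :=
    Real.continuous_sqrt.comp hφ'_c
  -- compact supports
  have hcs_u2 : HasCompactSupport (fun x : ℝ => u x ^ 2) :=
    hsupp.comp_left (g := fun y => y ^ 2) (by simp)
  have hcs_u3 : HasCompactSupport (fun x : ℝ => u x ^ 3) :=
    hsupp.comp_left (g := fun y => y ^ 3) (by simp)
  have hcs_au : HasCompactSupport (fun x : ℝ => |u x|) :=
    hsupp.comp_left (g := fun y => |y|) (by simp)
  have hcs_u' : HasCompactSupport (deriv u) := hsupp.deriv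
  have hcs_au' : HasCompactSupport (fun x : ℝ => |deriv u x|) :=
    hcs_u'.comp_left (g := fun y => |y|) (by simp)
  have hcs_u'2 : HasCompactSupport (fun x : ℝ => deriv u x ^ 2) :=
    hcs_u'.comp_left (g := fun y => y ^ 2) (by simp)
  -- the four main integrals
  set A := ∫ x : ℝ, (deriv u x) ^ 2 * deriv φ x with hAdef
  set B := ∫ x : ℝ, (u x) ^ 2 * deriv φ x with hBdef
  set D := ∫ x : ℝ, (u x) ^ 2 * |deriv (deriv φ) x| with hDdef
  set E := ∫ x : ℝ, (u x) ^ 2 * Real.sqrt (deriv φ x) with hEdef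
  -- integrabilities
  have intF1 : Integrable (fun x : ℝ => u x ^ 3 * deriv φ x) :=
    (hu_c.pow 3 |>.mul hφ'_c).integrable_of_hasCompactSupport hcs_u3.mul_right
  have intF2 : Integrable (fun x : ℝ => u x ^ 2 * Real.sqrt (deriv φ x)) :=
    (hu_c.pow 2 |>.mul hsφ'_c).integrable_of_hasCompactSupport hcs_u2.mul_right
  have intF4 : Integrable (fun x : ℝ => deriv u x ^ 2 * deriv φ x) :=
    (hu'_c.pow 2 |>.mul hφ'_c).integrable_of_hasCompactSupport hcs_u'2.mul_right
  have intF5 : Integrable (fun x : ℝ => u x ^ 2 * |deriv (deriv φ) x|) :=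
    (hu_c.pow 2 |>.mul hφ''_c.abs).integrable_of_hasCompactSupport hcs_u2.mul_right
  have intQ : Integrable (fun x : ℝ => |u x| * |deriv u x| * deriv φ x) :=
    ((hu_c.abs.mul hu'_c.abs).mul hφ'_c).integrable_of_hasCompactSupport
      (hcs_au.mul_right.mul_right)
  -- nonnegativity of main integrals
  have hA0 : 0 ≤ A := integral_nonneg fun x => mul_nonneg (sq_nonneg _) (hφ' x)
  have hB0 : 0 ≤ B := integral_nonneg fun x => mul_nonneg (sq_nonneg _) (hφ' x)
  have hD0 : 0 ≤ D := integral_nonneg fun x => mul_nonneg (sq_nonneg _) (abs_nonneg _)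
  have hE0 : 0 ≤ E := integral_nonneg fun x => mul_nonneg (sq_nonneg _) (Real.sqrt_nonneg _)
  -- Cauchy-Schwarz : ∫ |u| |u'| φ' ≤ √A √B
  have hCS : (∫ x : ℝ, |u x| * |deriv u x| * deriv φ x) ≤ Real.sqrt A * Real.sqrt B := by
    set f₁ := fun x : ℝ => |deriv u x| * Real.sqrt (deriv φ x) with hf₁def
    set g₁ := fun x : ℝ => |u x| * Real.sqrt (deriv φ x) with hg₁def
    have hf₁c : Continuous f₁ := hu'_c.abs.mul hsφ'_c
    have hg₁c : Continuous g₁ := hu_c.abs.mul hsφ'_c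
    have hf₁m : MemLp f₁ (ENNReal.ofReal 2) volume :=
      hf₁c.memLp_of_hasCompactSupport hcs_au'.mul_right
    have hg₁m : MemLp g₁ (ENNReal.ofReal 2) volume :=
      hg₁c.memLp_of_hasCompactSupport hcs_au.mul_right
    have hpq : Real.HolderConjugate 2 2 := Real.holderConjugate_iff.mpr ⟨one_lt_two, by norm_num⟩
    have key := integral_mul_le_Lp_mul_Lq_of_nonneg hpq
      (ae_of_all _ fun x => mul_nonneg (abs_nonneg _) (Real.sqrt_nonneg _))
      (ae_of_all _ fun x => mul_nonneg (abs_nonneg _) (Real.sqrt_nonneg _)) hf₁m hg₁m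
    have e0 : (∫ x : ℝ, f₁ x * g₁ x) = ∫ x : ℝ, |u x| * |deriv u x| * deriv φ x := by
      congr 1; funext x
      have hss : Real.sqrt (deriv φ x) * Real.sqrt (deriv φ x) = deriv φ x :=
        Real.mul_self_sqrt (hφ' x)
      simp only [hf₁def, hg₁def]
      linear_combination (|u x| * |deriv u x|) * hss
    have e1 : (∫ x : ℝ, f₁ x ^ (2:ℝ)) = A := by
      rw [hAdef]; congr 1; funext x
      rw [Real.rpow_two, hf₁def]
      simp only
      rw [mul_pow, sq_abs, Real.sq_sqrt (hφ' x)]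
    have e2 : (∫ x : ℝ, g₁ x ^ (2:ℝ)) = B := by
      rw [hBdef]; congr 1; funext x
      rw [Real.rpow_two, hg₁def]
      simp only
      rw [mul_pow, sq_abs, Real.sq_sqrt (hφ' x)]
    rw [e0, e1, e2] at key
    calc (∫ x : ℝ, |u x| * |deriv u x| * deriv φ x)
        ≤ A ^ ((1:ℝ)/2) * B ^ ((1:ℝ)/2) := key
      _ = Real.sqrt A * Real.sqrt B := by rw [Real.sqrt_eq_rpow, Real.sqrt_eq_rpow]
  -- pointwise bound : u² φ' ≤ S
  set S := 2 * (Real.sqrt A * Real.sqrt B) + D with hSdef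
  have hS0 : 0 ≤ S := by positivity
  have hsup : ∀ x, u x ^ 2 * deriv φ x ≤ S := by
    set f := fun x : ℝ => u x ^ 2 * deriv φ x with hfdef
    set g := fun x : ℝ => (2 * u x * deriv u x) * deriv φ x
      + u x ^ 2 * deriv (deriv φ) x with hgdef
    set h := fun x : ℝ => 2 * (|u x| * |deriv u x| * deriv φ x)
      + u x ^ 2 * |deriv (deriv φ) x| with hhdef
    have hfd : ∀ x, HasDerivAt f (g x) x := by
      intro x
      have h1 : HasDerivAt (fun y => u y ^ 2) (2 * u x * deriv u x) x := by
        have := ((hud x).hasDerivAt).fun_pow 2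
        refine this.congr_deriv ?_
        push_cast
        ring
      exact h1.mul ((hφ'd x).hasDerivAt)
    have hg_c : Continuous g :=
      (((continuous_const.mul hu_c).mul hu'_c).mul hφ'_c).add ((hu_c.pow 2).mul hφ''_c)
    have hgh : ∀ x, g x ≤ h x := by
      intro x
      have h1 : u x * deriv u x ≤ |u x| * |deriv u x| := by
        calc u x * deriv u x ≤ |u x * deriv u x| := le_abs_self _
          _ = |u x| * |deriv u x| := abs_mul _ _
      have h2 : (2 * u x * deriv u x) * deriv φ x ≤ 2 * (|u x| * |deriv u x| * deriv φ x) := by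
        have := mul_le_mul_of_nonneg_right (by linarith : 2 * u x * deriv u x ≤ 2 * (|u x| * |deriv u x|)) (hφ' x)
        linarith [this]
      have h3 : u x ^ 2 * deriv (deriv φ) x ≤ u x ^ 2 * |deriv (deriv φ) x| :=
        mul_le_mul_of_nonneg_left (le_abs_self _) (sq_nonneg _)
      simp only [hgdef, hhdef]
      linarith
    have hh_nonneg : ∀ x, 0 ≤ h x := by
      intro x
      have := hφ' x
      have : 0 ≤ |u x| * |deriv u x| * deriv φ x :=
        mul_nonneg (mul_nonneg (abs_nonneg _) (abs_nonneg _)) (hφ' x)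
      have : 0 ≤ u x ^ 2 * |deriv (deriv φ) x| := mul_nonneg (sq_nonneg _) (abs_nonneg _)
      simp only [hhdef]
      positivity
    have hh_int : Integrable h := (intQ.const_mul 2).add intF5
    have hh_le : (∫ x : ℝ, h x) ≤ S := by
      have : (∫ x : ℝ, h x)
          = 2 * (∫ x : ℝ, |u x| * |deriv u x| * deriv φ x) + D := by
        rw [hhdef, integral_add (intQ.const_mul 2) intF5, integral_const_mul, hDdef]
      rw [this, hSdef]
      have h2 := hCS
      nlinarith
    -- zero far to the left
    have hcs_f : HasCompactSupport f := hcs_u2.mul_right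
    obtain ⟨r, hr⟩ := hcs_f.isBounded.subset_closedBall (0:ℝ)
    set a := -(|r|+1) with hadef
    have hfa : ∀ y ≤ a, f y = 0 := by
      intro y hy
      apply image_eq_zero_of_notMem_tsupport
      intro hmem
      have h1 := hr hmem
      simp only [Metric.mem_closedBall, Real.dist_eq, sub_zero] at h1
      have h2 : -y ≤ |y| := neg_le_abs y
      have h3 : r ≤ |r| := le_abs_self r
      rw [hadef] at hy
      linarith
    intro x
    rcases le_or_gt x a with hx | hx
    · have : f x = 0 := hfa x hx
      calc u x ^ 2 * deriv φ x = f x := rfl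
        _ = 0 := this
        _ ≤ ∫ y : ℝ, h y := integral_nonneg hh_nonneg
        _ ≤ S := hh_le
    · have hFTC : ∫ t in a..x, g t = f x - f a :=
        intervalIntegral.integral_eq_sub_of_hasDerivAt (fun t _ => hfd t)
          (hg_c.intervalIntegrable a x)
      have hfx : f x = ∫ t in a..x, g t := by
        rw [hFTC, hfa a le_rfl, sub_zero]
      calc u x ^ 2 * deriv φ x = f x := rfl
        _ = ∫ t in a..x, g t := hfx
        _ ≤ ∫ t in a..x, h t := by
            apply intervalIntegral.integral_mono_on hx.le (hg_c.intervalIntegrable a x)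
              (hh_int.intervalIntegrable) (fun t _ => hgh t)
        _ = ∫ t in Set.Ioc a x, h t := intervalIntegral.integral_of_le hx.le
        _ ≤ ∫ t : ℝ, h t := setIntegral_le_integral hh_int (ae_of_all _ hh_nonneg)
        _ ≤ S := hh_le
  -- sup bound for |u| √φ'
  set M := Real.sqrt S with hMdef
  have hM0 : 0 ≤ M := Real.sqrt_nonneg _
  have hMx : ∀ x, |u x| * Real.sqrt (deriv φ x) ≤ M := by
    intro x
    rw [hMdef]
    apply Real.le_sqrt_of_sq_le
    rw [mul_pow, sq_abs, Real.sq_sqrt (hφ' x)]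
    exact hsup x
  -- main integral bound
  have hmain : (∫ x : ℝ, u x ^ 3 * deriv φ x) ≤ M * E := by
    have hpt : ∀ x, u x ^ 3 * deriv φ x ≤ M * (u x ^ 2 * Real.sqrt (deriv φ x)) := by
      intro x
      have h1 : u x ^ 3 * deriv φ x ≤ |u x| ^ 3 * deriv φ x := by
        apply mul_le_mul_of_nonneg_right _ (hφ' x)
        calc u x ^ 3 ≤ |u x ^ 3| := le_abs_self _
          _ = |u x| ^ 3 := abs_pow _ _
      have h2 : |u x| ^ 3 * deriv φ x
          = (|u x| * Real.sqrt (deriv φ x)) * (u x ^ 2 * Real.sqrt (deriv φ x)) := by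
        have hss : Real.sqrt (deriv φ x) * Real.sqrt (deriv φ x) = deriv φ x :=
          Real.mul_self_sqrt (hφ' x)
        have habs : |u x| ^ 2 = u x ^ 2 := sq_abs _
        linear_combination (|u x| * deriv φ x) * habs - (|u x| * u x ^ 2) * hss
      have h3 : (|u x| * Real.sqrt (deriv φ x)) * (u x ^ 2 * Real.sqrt (deriv φ x))
          ≤ M * (u x ^ 2 * Real.sqrt (deriv φ x)) :=
        mul_le_mul_of_nonneg_right (hMx x)
          (mul_nonneg (sq_nonneg _) (Real.sqrt_nonneg _))
      linarith
    calc (∫ x : ℝ, u x ^ 3 * deriv φ x)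
        ≤ ∫ x : ℝ, M * (u x ^ 2 * Real.sqrt (deriv φ x)) :=
          integral_mono intF1 (intF2.const_mul M) hpt
      _ = M * E := by rw [integral_const_mul, hEdef]
  -- bound on M
  have hMle : M ≤ Real.sqrt 2 * (A ^ ((1:ℝ)/4) * B ^ ((1:ℝ)/4)) + Real.sqrt D := by
    have q4 : ∀ c : ℝ, 0 ≤ c → Real.sqrt (Real.sqrt c) = c ^ ((1:ℝ)/4) := by
      intro c hc
      rw [Real.sqrt_eq_rpow, Real.sqrt_eq_rpow, ← Real.rpow_mul hc]
      norm_num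
    calc M ≤ Real.sqrt (2 * (Real.sqrt A * Real.sqrt B)) + Real.sqrt D := by
          rw [hMdef, hSdef]
          exact aux_sqrt_add _ _ (by positivity) hD0
      _ = Real.sqrt 2 * (A ^ ((1:ℝ)/4) * B ^ ((1:ℝ)/4)) + Real.sqrt D := by
          rw [Real.sqrt_mul (by norm_num), Real.sqrt_mul (Real.sqrt_nonneg A),
            q4 A hA0, q4 B hB0]
  -- Young step
  have hYoung : Real.sqrt 2 * (A ^ ((1:ℝ)/4) * B ^ ((1:ℝ)/4)) * E
      ≤ δ * A + δ ^ (-(1/3 : ℝ)) * (B ^ ((1:ℝ)/3) * E ^ ((4:ℝ)/3)) := by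
    have key := aux_young A (B ^ ((1:ℝ)/4) * E) δ hA0
      (mul_nonneg (Real.rpow_nonneg hB0 _) hE0) hδ
    have e : (B ^ ((1:ℝ)/4) * E) ^ ((4:ℝ)/3) = B ^ ((1:ℝ)/3) * E ^ ((4:ℝ)/3) := by
      rw [Real.mul_rpow (Real.rpow_nonneg hB0 _) hE0, ← Real.rpow_mul hB0]
      norm_num
    rw [e] at key
    calc Real.sqrt 2 * (A ^ ((1:ℝ)/4) * B ^ ((1:ℝ)/4)) * E
        = Real.sqrt 2 * A ^ ((1:ℝ)/4) * (B ^ ((1:ℝ)/4) * E) := by ring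
      _ ≤ δ * A + δ ^ (-(1/3 : ℝ)) * (B ^ ((1:ℝ)/3) * E ^ ((4:ℝ)/3)) := key
  -- final assembly
  have hfinal : M * E ≤ δ * A + δ ^ (-(1/3 : ℝ)) * (B ^ ((1:ℝ)/3) * E ^ ((4:ℝ)/3))
      + Real.sqrt D * E := by
    have h1 : M * E ≤ (Real.sqrt 2 * (A ^ ((1:ℝ)/4) * B ^ ((1:ℝ)/4)) + Real.sqrt D) * E :=
      mul_le_mul_of_nonneg_right hMle hE0
    have h2 : (Real.sqrt 2 * (A ^ ((1:ℝ)/4) * B ^ ((1:ℝ)/4)) + Real.sqrt D) * E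
        = Real.sqrt 2 * (A ^ ((1:ℝ)/4) * B ^ ((1:ℝ)/4)) * E + Real.sqrt D * E := by ring
    linarith [hYoung]
  have hsqrtD : Real.sqrt D = D ^ ((1:ℝ)/2) := Real.sqrt_eq_rpow D
  calc (∫ x : ℝ, u x ^ 3 * deriv φ x) ≤ M * E := hmain
    _ ≤ δ * A + δ ^ (-(1/3 : ℝ)) * (B ^ ((1:ℝ)/3) * E ^ ((4:ℝ)/3)) + Real.sqrt D * E := hfinal
    _ = δ * A + 1 * δ ^ (-(1 / 3 : ℝ)) * B ^ ((1:ℝ)/3) * E ^ ((4:ℝ)/3) + D ^ ((1:ℝ)/2) * E := by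
        rw [hsqrtD]; ring
end

section
/- There exists an absolute constant C > 0 with the following property: for every M ≥ 1, every continuously differentiable u : ℝ → ℝ with compact support, and every twice continuously differentiable φ : ℝ → ℝ satisfying φ(x) ≥ 1, 0 ≤ φ'(x) ≤ M, and |φ''(x)| ≤ M for all x, one has ∫_ℝ u³ φ' dx ≤ (1/4) ∫_ℝ (u')² φ' dx + C M² [ (∫_ℝ u² φ dx)^{5/3} + (∫_ℝ u² φ dx)^{3/2} ]. -/
open MeasureTheory

lemma sqrt_add_le' {a b : ℝ} (ha : 0 ≤ a) (hb : 0 ≤ b) :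
    Real.sqrt (a+b) ≤ Real.sqrt a + Real.sqrt b := by
  rw [show a + b = Real.sqrt a ^ 2 + Real.sqrt b ^ 2 by
    rw [Real.sq_sqrt ha, Real.sq_sqrt hb]]
  have h1 := Real.sqrt_nonneg a
  have h2 := Real.sqrt_nonneg b
  nlinarith [Real.sqrt_le_sqrt (show Real.sqrt a ^2 + Real.sqrt b ^2 ≤ (Real.sqrt a + Real.sqrt b)^2 by nlinarith),
    Real.sqrt_sq (add_nonneg h1 h2)]

lemma young4 {a b : ℝ} (ha : 0 ≤ a) (hb : 0 ≤ b) :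
    a * b ≤ a ^ (4:ℝ) / 4 + (3/4) * b ^ ((4:ℝ)/3) := by
  have := Real.young_inequality_of_nonneg ha hb (p := 4) (q := 4/3) ⟨by norm_num, by norm_num, by norm_num⟩
  calc a*b ≤ a ^ (4:ℝ) / 4 + b ^ ((4:ℝ)/3) / (4/3) := this
    _ = a ^ (4:ℝ) / 4 + (3/4) * b ^ ((4:ℝ)/3) := by ring

lemma deriv_c1 (φ : ℝ → ℝ) (h : ContDiff ℝ 2 φ) : ContDiff ℝ 1 (deriv φ) := by
  have h2 : ContDiff ℝ ((1:WithTop ℕ∞) + 1) φ := by convert h using 2; norm_num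
  exact (contDiff_succ_iff_deriv.mp h2).2.2

lemma sup_le_integral_deriv {f : ℝ → ℝ} (hf : ContDiff ℝ 1 f) (hc : HasCompactSupport f)
    (b : ℝ) : f b ≤ ∫ x, |deriv f x| := by
  rw [← hc.integral_Iic_deriv_eq hf b]
  have hint : Integrable (deriv f) :=
    (hf.continuous_deriv le_rfl).integrable_of_hasCompactSupport hc.deriv
  calc ∫ x in Set.Iic b, deriv f x ≤ ∫ x in Set.Iic b, |deriv f x| :=
        integral_mono hint.integrableOn hint.abs.integrableOn (fun x => le_abs_self _)
    _ ≤ ∫ x, |deriv f x| :=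
        setIntegral_le_integral hint.abs (Filter.Eventually.of_forall fun x => abs_nonneg _)

lemma ptwise_bound {M t a b' p q : ℝ} (ht : 0 < t) (hp0 : 0 ≤ p) (hpM : p ≤ M)
    (hq1 : -M ≤ q) (hq2 : q ≤ M) :
    |2 * a * b' * p + a ^ 2 * q| ≤ t * (b' ^ 2 * p) + (M / t + M) * a ^ 2 := by
  have hid : 1 / t * ((t * b' - a) ^ 2 * p) = t * (b' ^ 2 * p) - 2 * a * b' * p + 1 / t * (a ^ 2 * p) := by
    field_simp; ring
  have hid2 : 1 / t * ((t * b' + a) ^ 2 * p) = t * (b' ^ 2 * p) + 2 * a * b' * p + 1 / t * (a ^ 2 * p) := by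
    field_simp; ring
  have hpos1 : 0 ≤ 1 / t * ((t * b' - a) ^ 2 * p) := by positivity
  have hpos2 : 0 ≤ 1 / t * ((t * b' + a) ^ 2 * p) := by positivity
  have hap : 1 / t * (a ^ 2 * p) ≤ 1 / t * (a ^ 2 * M) := by
    apply mul_le_mul_of_nonneg_left _ (by positivity)
    nlinarith [sq_nonneg a]
  have hqa1 : a ^ 2 * -M ≤ a ^ 2 * q := mul_le_mul_of_nonneg_left hq1 (sq_nonneg a)
  have hqa2 : a ^ 2 * q ≤ a ^ 2 * M := mul_le_mul_of_nonneg_left hq2 (sq_nonneg a)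
  have e1 : 1 / t * (a ^ 2 * M) = M / t * a ^ 2 := by ring
  rw [abs_le]
  constructor
  · linarith
  · linarith

set_option maxHeartbeats 2000000 in
/-- Key energy estimate: there is an absolute constant `C > 0` such that for every `M ≥ 1`,
every C¹ compactly supported `u` and every C² weight `φ` with `φ ≥ 1`, `0 ≤ φ' ≤ M`,
`|φ''| ≤ M`, one has
`∫ u³ φ' ≤ (1/4) ∫ (u')² φ' + C M² [(∫ u² φ)^{5/3} + (∫ u² φ)^{3/2}]`. -/
theorem cubic_term_energy_estimate :
    ∃ C : ℝ, 0 < C ∧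
      ∀ (M : ℝ), 1 ≤ M →
        ∀ (u φ : ℝ → ℝ), ContDiff ℝ 1 u → HasCompactSupport u →
          ContDiff ℝ 2 φ → (∀ x, 1 ≤ φ x) →
          (∀ x, 0 ≤ deriv φ x) → (∀ x, deriv φ x ≤ M) →
          (∀ x, |deriv (deriv φ) x| ≤ M) →
          (∫ x : ℝ, (u x) ^ 3 * deriv φ x)
            ≤ (1 / 4) * (∫ x : ℝ, (deriv u x) ^ 2 * deriv φ x)
              + C * M ^ 2 *
                ((∫ x : ℝ, (u x) ^ 2 * φ x) ^ ((5 : ℝ) / 3)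
                  + (∫ x : ℝ, (u x) ^ 2 * φ x) ^ ((3 : ℝ) / 2)) := by
  refine ⟨2, by norm_num, ?_⟩
  intro M hM u φ hu hcu hφ hφ1 hφ'0 hφ'M hφ''M
  have hMpos : (0:ℝ) < M := lt_of_lt_of_le one_pos hM
  -- continuity facts
  have huc : Continuous u := hu.continuous
  have hu'c : Continuous (deriv u) := hu.continuous_deriv le_rfl
  have hφc : Continuous φ := hφ.continuous
  have hφ'1 : ContDiff ℝ 1 (deriv φ) := deriv_c1 φ hφ
  have hφ'c : Continuous (deriv φ) := hφ'1.continuous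
  have hφ''c : Continuous (deriv (deriv φ)) := hφ'1.continuous_deriv le_rfl
  -- compact supports
  have hcs2 : HasCompactSupport (fun x => u x ^ 2) := by
    have : HasCompactSupport (u * u) := hcu.mul_right
    convert this using 1; funext x; simp only [Pi.mul_apply]; ring
  have hcsE : HasCompactSupport (fun x => u x ^ 2 * φ x) := by
    have : HasCompactSupport (u * (u * φ)) := hcu.mul_right
    convert this using 1; funext x; simp only [Pi.mul_apply]; ring
  have hcs3 : HasCompactSupport (fun x => u x ^ 3 * deriv φ x) := by
    have : HasCompactSupport (u * (u * (u * deriv φ))) := hcu.mul_right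
    convert this using 1; funext x; simp only [Pi.mul_apply]; ring
  have hcsD : HasCompactSupport (fun x => deriv u x ^ 2 * deriv φ x) := by
    have : HasCompactSupport (deriv u * (deriv u * deriv φ)) := hcu.deriv.mul_right
    convert this using 1; funext x; simp only [Pi.mul_apply]; ring
  -- integrability
  have i1 : Integrable (fun x => u x ^ 2) := ((huc.pow 2)).integrable_of_hasCompactSupport hcs2
  have iE : Integrable (fun x => u x ^ 2 * φ x) :=
    ((huc.pow 2).mul hφc).integrable_of_hasCompactSupport hcsE
  have i3 : Integrable (fun x => u x ^ 3 * deriv φ x) :=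
    ((huc.pow 3).mul hφ'c).integrable_of_hasCompactSupport hcs3
  have iD : Integrable (fun x => deriv u x ^ 2 * deriv φ x) :=
    ((hu'c.pow 2).mul hφ'c).integrable_of_hasCompactSupport hcsD
  set E := ∫ x : ℝ, u x ^ 2 * φ x with hEdef
  set D := ∫ x : ℝ, deriv u x ^ 2 * deriv φ x with hDdef
  set J := ∫ x : ℝ, u x ^ 2 with hJdef
  have hJ0 : 0 ≤ J := integral_nonneg fun x => sq_nonneg _
  have hE0 : 0 ≤ E := integral_nonneg fun x => by
    have := hφ1 x; positivity
  have hD0 : 0 ≤ D := integral_nonneg fun x => by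
    have := hφ'0 x; positivity
  have hJE : J ≤ E := by
    apply integral_mono i1 iE
    intro x
    dsimp only
    have h1 := hφ1 x
    nlinarith [sq_nonneg (u x)]
  -- the function g = u² φ'
  set g : ℝ → ℝ := fun x => u x ^ 2 * deriv φ x with hgdef
  have hg1 : ContDiff ℝ 1 g := (hu.pow 2).mul hφ'1
  have hgc : HasCompactSupport g := by
    have : HasCompactSupport (u * (u * deriv φ)) := hcu.mul_right
    convert this using 1; funext x; simp only [Pi.mul_apply]; ring
  have hderiv_g : ∀ x, deriv g x
      = 2 * u x * deriv u x * deriv φ x + u x ^ 2 * deriv (deriv φ) x := by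
    intro x
    have h1 : HasDerivAt (fun y => u y ^ 2) (2 * u x * deriv u x) x := by
      have h := ((hu.differentiable one_ne_zero) x).hasDerivAt
      have := h.pow 2
      refine this.congr_deriv ?_
      simp
      try ring
    have h2 : HasDerivAt (deriv φ) (deriv (deriv φ) x) x :=
      ((hφ'1.differentiable one_ne_zero) x).hasDerivAt
    have h3 := h1.mul h2
    have h4 : HasDerivAt g (2 * u x * deriv u x * deriv φ x + u x ^ 2 * deriv (deriv φ) x) x := by
      exact h3
    exact h4.deriv
  -- key sup bound
  have key : ∀ t : ℝ, 0 < t → ∀ b : ℝ, u b ^ 2 * deriv φ b ≤ t * D + (M/t + M) * E := by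
    intro t ht b
    have h1 : u b ^ 2 * deriv φ b ≤ ∫ x, |deriv g x| := sup_le_integral_deriv hg1 hgc b
    have iabs : Integrable (fun x => |deriv g x|) :=
      ((hg1.continuous_deriv le_rfl).integrable_of_hasCompactSupport hgc.deriv).abs
    have icomb : Integrable (fun x => t * (deriv u x ^ 2 * deriv φ x) + (M/t + M) * u x ^ 2) :=
      (iD.const_mul t).add (i1.const_mul (M/t + M))
    have h2 : ∫ x, |deriv g x|
        ≤ ∫ x, (t * (deriv u x ^ 2 * deriv φ x) + (M/t + M) * u x ^ 2) := by
      apply integral_mono iabs icomb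
      intro x
      dsimp only
      rw [hderiv_g x]
      exact ptwise_bound ht (hφ'0 x) (hφ'M x) (neg_le_of_abs_le (hφ''M x)) (le_of_abs_le (hφ''M x))
    have h3 : ∫ x, (t * (deriv u x ^ 2 * deriv φ x) + (M/t + M) * u x ^ 2)
        = t * D + (M/t + M) * J := by
      rw [integral_add (iD.const_mul t) (i1.const_mul (M/t + M)),
        integral_const_mul, integral_const_mul]
    have h4 : t * D + (M/t + M) * J ≤ t * D + (M/t + M) * E := by
      have : 0 ≤ M/t + M := by positivity
      nlinarith
    calc u b ^ 2 * deriv φ b ≤ ∫ x, |deriv g x| := h1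
      _ ≤ _ := h2
      _ = t * D + (M/t + M) * J := h3
      _ ≤ t * D + (M/t + M) * E := h4
  -- step 2 : I3 ≤ √(M S) E
  have step2 : ∀ S : ℝ, 0 ≤ S → (∀ b : ℝ, u b ^ 2 * deriv φ b ≤ S) →
      (∫ x : ℝ, u x ^ 3 * deriv φ x) ≤ Real.sqrt (M * S) * E := by
    intro S hS0 hSb
    have hpt : ∀ x, u x ^ 3 * deriv φ x ≤ Real.sqrt (M * S) * u x ^ 2 := by
      intro x
      have hp0 : 0 ≤ deriv φ x := hφ'0 x
      have h1 : |u x| * deriv φ x ≤ Real.sqrt (M * S) := by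
        have hsq : (|u x| * deriv φ x)^2 ≤ M * S := by
          have : (|u x| * deriv φ x)^2 = (u x ^2 * deriv φ x) * deriv φ x := by
            rw [mul_pow, sq_abs]; ring
          rw [this]
          have h2 := hSb x
          have h3 := hφ'M x
          have h4 : 0 ≤ u x ^2 * deriv φ x := by positivity
          nlinarith
        calc |u x| * deriv φ x = Real.sqrt ((|u x| * deriv φ x)^2) :=
              (Real.sqrt_sq (by positivity)).symm
          _ ≤ Real.sqrt (M * S) := Real.sqrt_le_sqrt hsq
      calc u x ^ 3 * deriv φ x ≤ |u x|^3 * deriv φ x := by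
            apply mul_le_mul_of_nonneg_right _ hp0
            calc u x ^ 3 ≤ |u x ^ 3| := le_abs_self _
              _ = |u x|^3 := by rw [abs_pow]
        _ = (|u x| * deriv φ x) * u x ^2 := by rw [← sq_abs]; ring
        _ ≤ Real.sqrt (M * S) * u x ^2 := by
            apply mul_le_mul_of_nonneg_right h1 (sq_nonneg _)
    calc (∫ x : ℝ, u x ^ 3 * deriv φ x) ≤ ∫ x, Real.sqrt (M * S) * u x ^2 :=
          integral_mono i3 (i1.const_mul _) hpt
      _ = Real.sqrt (M * S) * J := integral_const_mul _ _
      _ ≤ Real.sqrt (M * S) * E := by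
          apply mul_le_mul_of_nonneg_left hJE (Real.sqrt_nonneg _)
  -- RHS nonneg helpers
  have hE53 : (0:ℝ) ≤ E ^ ((5:ℝ)/3) := Real.rpow_nonneg hE0 _
  have hE32 : (0:ℝ) ≤ E ^ ((3:ℝ)/2) := Real.rpow_nonneg hE0 _

  have hRHS2 : (0:ℝ) ≤ 2 * M ^ 2 * (E ^ ((5:ℝ)/3) + E ^ ((3:ℝ)/2)) :=
    mul_nonneg (by positivity) (add_nonneg hE53 hE32)
  have hE32' : E ^ ((3:ℝ)/2) = Real.sqrt E * E := by
    rw [Real.sqrt_eq_rpow, show (3:ℝ)/2 = 1/2 + 1 by norm_num, Real.rpow_add' hE0 (by norm_num),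
      Real.rpow_one]
  rcases eq_or_lt_of_le hE0 with hEeq | hEpos
  · -- E = 0
    have hS0 : 0 ≤ (1:ℝ) * D + (M/1 + M) * E := by
      have h1 : 0 ≤ (M/1 + M) * E := mul_nonneg (by positivity) hE0
      linarith
    have h := step2 _ hS0 (key 1 one_pos)
    rw [← hEeq, mul_zero] at h
    linarith
  · rcases eq_or_lt_of_le hD0 with hDeq | hDpos
    · -- D = 0, take t = 1
      have hSval : (1:ℝ) * D + (M/1 + M) * E = M^2 * (2 * E) / M := by
        rw [← hDeq]; field_simp; ring
      have hS0 : 0 ≤ (1:ℝ) * D + (M/1 + M) * E := by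
        rw [hSval]; positivity
      have h := step2 _ hS0 (key 1 one_pos)
      have hMS : M * ((1:ℝ) * D + (M/1 + M) * E) = M^2 * (2 * E) := by
        rw [hSval]; field_simp
      rw [hMS] at h
      have hsq : Real.sqrt (M^2 * (2*E)) = M * (Real.sqrt 2 * Real.sqrt E) := by
        rw [Real.sqrt_mul (sq_nonneg M), Real.sqrt_sq hMpos.le, Real.sqrt_mul (by norm_num)]
      rw [hsq] at h
      have h2le : Real.sqrt 2 ≤ 2 := by
        nlinarith [Real.sq_sqrt (by norm_num : (0:ℝ) ≤ 2), Real.sqrt_nonneg 2]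
      have hfin : M * (Real.sqrt 2 * Real.sqrt E) * E ≤ 2 * M^2 * (Real.sqrt E * E) := by
        have hsE : 0 ≤ Real.sqrt E := Real.sqrt_nonneg E
        have hc : Real.sqrt 2 * M ≤ 2 * M^2 := by nlinarith
        have := mul_le_mul_of_nonneg_right hc (mul_nonneg hsE hE0)
        nlinarith [this]
      rw [← hE32'] at hfin
      have hE53' : (0:ℝ) ≤ 2 * M^2 * E ^ ((5:ℝ)/3) := mul_nonneg (by positivity) hE53
      linarith
    · -- D > 0 : main case
      set t := Real.sqrt (M*E) / Real.sqrt D with htdef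
      have hsMEpos : 0 < Real.sqrt (M*E) := Real.sqrt_pos.mpr (by positivity)
      have hsDpos : 0 < Real.sqrt D := Real.sqrt_pos.mpr hDpos
      have ht : 0 < t := div_pos hsMEpos hsDpos
      have hneD : Real.sqrt D ≠ 0 := ne_of_gt hsDpos
      have hneME : Real.sqrt (M*E) ≠ 0 := ne_of_gt hsMEpos
      have hDD : Real.sqrt D * Real.sqrt D = D := Real.mul_self_sqrt hD0
      have hMEME : Real.sqrt (M*E) * Real.sqrt (M*E) = M*E := Real.mul_self_sqrt (by positivity)
      clear_value t E D J
      have h1 : t * D = Real.sqrt (M*E) * Real.sqrt D := by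
        rw [htdef, div_mul_eq_mul_div, div_eq_iff hneD, mul_assoc, hDD]
      have h2 : (M/t) * E = Real.sqrt (M*E) * Real.sqrt D := by
        rw [htdef, div_div_eq_mul_div, div_mul_eq_mul_div, div_eq_iff hneME]
        linear_combination (-Real.sqrt D) * hMEME
      have hSval : t * D + (M/t + M) * E = 2 * Real.sqrt (M*E) * Real.sqrt D + M * E := by
        rw [add_mul, h1, h2]; ring
      have hS0 : 0 ≤ t * D + (M/t + M) * E := by
        rw [hSval]; positivity
      have h := step2 _ hS0 (key t ht)
      have hMS : M * (t * D + (M/t + M) * E)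
          = 2*M*Real.sqrt (M*E)*Real.sqrt D + M^2 * E := by
        rw [hSval]; ring
      rw [hMS] at h
      -- split the sqrt
      have hsplit : Real.sqrt (2*M*Real.sqrt (M*E)*Real.sqrt D + M^2 * E)
          ≤ Real.sqrt (2*M*Real.sqrt (M*E)) * Real.sqrt (Real.sqrt D) + M * Real.sqrt E := by
        have hx : (0:ℝ) ≤ 2*M*Real.sqrt (M*E)*Real.sqrt D := by positivity
        have hy : (0:ℝ) ≤ M^2*E := by positivity
        calc Real.sqrt (2*M*Real.sqrt (M*E)*Real.sqrt D + M^2 * E)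
            ≤ Real.sqrt (2*M*Real.sqrt (M*E)*Real.sqrt D) + Real.sqrt (M^2*E) :=
              sqrt_add_le' hx hy
          _ = Real.sqrt (2*M*Real.sqrt (M*E)) * Real.sqrt (Real.sqrt D) + M * Real.sqrt E := by
              rw [Real.sqrt_mul (by positivity), Real.sqrt_mul (sq_nonneg M), Real.sqrt_sq hMpos.le]
      have hI3 : (∫ x : ℝ, u x ^ 3 * deriv φ x)
          ≤ Real.sqrt (Real.sqrt D) * (Real.sqrt (2*M*Real.sqrt (M*E)) * E) + M * Real.sqrt E * E := by
        calc (∫ x : ℝ, u x ^ 3 * deriv φ x)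
            ≤ Real.sqrt (2*M*Real.sqrt (M*E)*Real.sqrt D + M^2 * E) * E := h
          _ ≤ (Real.sqrt (2*M*Real.sqrt (M*E)) * Real.sqrt (Real.sqrt D) + M * Real.sqrt E) * E :=
              mul_le_mul_of_nonneg_right hsplit hE0
          _ = Real.sqrt (Real.sqrt D) * (Real.sqrt (2*M*Real.sqrt (M*E)) * E) + M * Real.sqrt E * E := by
              ring
      -- Young on the first term
      obtain ⟨a, hadef⟩ : ∃ a, a = Real.sqrt (Real.sqrt D) := ⟨_, rfl⟩
      obtain ⟨b, hbdef⟩ : ∃ b, b = Real.sqrt (2*M*Real.sqrt (M*E)) * E := ⟨_, rfl⟩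
      rw [← hadef, ← hbdef] at hI3
      have ha0 : 0 ≤ a := hadef ▸ Real.sqrt_nonneg _
      have hb0 : 0 ≤ b := hbdef ▸ mul_nonneg (Real.sqrt_nonneg _) hE0
      have hyoung := young4 ha0 hb0
      have ha4 : a ^ (4:ℝ) = D := by
        rw [hadef, show (4:ℝ) = ((4:ℕ):ℝ) by norm_num, Real.rpow_natCast,
          show (Real.sqrt (Real.sqrt D))^4 = ((Real.sqrt (Real.sqrt D))^2)^2 by ring,
          Real.sq_sqrt (Real.sqrt_nonneg D), Real.sq_sqrt hD0]
      have hb4 : b ^ (4:ℝ) = 4*M^3*E^5 := by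
        rw [hbdef, show (4:ℝ) = ((4:ℕ):ℝ) by norm_num, Real.rpow_natCast]
        have e1 : (Real.sqrt (2*M*Real.sqrt (M*E)) * E)^4
            = ((Real.sqrt (2*M*Real.sqrt (M*E)))^2)^2 * E^4 := by ring
        rw [e1, Real.sq_sqrt (by positivity)]
        have e2 : (2*M*Real.sqrt (M*E))^2 = 4*M^2*((Real.sqrt (M*E))^2) := by ring
        rw [e2, Real.sq_sqrt (by positivity)]
        ring
      have hb43 : b ^ ((4:ℝ)/3) = (4:ℝ)^((1:ℝ)/3) * M * E^((5:ℝ)/3) := by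
        rw [show (4:ℝ)/3 = 4 * (1/3) by norm_num, Real.rpow_mul hb0, hb4]
        rw [Real.mul_rpow (by positivity) (by positivity : (0:ℝ) ≤ E^5),
          Real.mul_rpow (by norm_num : (0:ℝ) ≤ 4) (by positivity : (0:ℝ) ≤ M^3)]
        rw [← Real.rpow_natCast M 3, ← Real.rpow_mul hMpos.le,
          ← Real.rpow_natCast E 5, ← Real.rpow_mul hE0]
        norm_num
      have h413 : (4:ℝ)^((1:ℝ)/3) ≤ 2 := by
        have hle : (4:ℝ)^((1:ℝ)/3) ≤ (8:ℝ)^((1:ℝ)/3) :=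
          Real.rpow_le_rpow (by norm_num) (by norm_num) (by norm_num)
        have h8 : (8:ℝ)^((1:ℝ)/3) = 2 := by
          rw [show (8:ℝ) = (2:ℝ)^(3:ℕ) by norm_num, ← Real.rpow_natCast 2 3,
            ← Real.rpow_mul (by norm_num : (0:ℝ) ≤ 2)]
          norm_num
        linarith
      have hterm1 : a * b ≤ (1/4) * D + 2 * M^2 * E^((5:ℝ)/3) := by
        have h34 : (3:ℝ)/4 * b ^ ((4:ℝ)/3) ≤ 2 * M^2 * E^((5:ℝ)/3) := by
          rw [hb43]
          have hM2 : (3:ℝ)/4 * ((4:ℝ)^((1:ℝ)/3) * M) ≤ 2 * M^2 := by nlinarith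
          nlinarith [hE53, mul_le_mul_of_nonneg_right hM2 hE53]
        calc a * b ≤ a ^ (4:ℝ)/4 + 3/4 * b ^ ((4:ℝ)/3) := hyoung
          _ ≤ (1/4) * D + 2 * M^2 * E^((5:ℝ)/3) := by rw [ha4]; linarith
      have hterm2 : M * Real.sqrt E * E ≤ 2 * M^2 * E^((3:ℝ)/2) := by
        rw [hE32']
        have hsE : 0 ≤ Real.sqrt E * E := mul_nonneg (Real.sqrt_nonneg E) hE0
        have hMM : M ≤ 2*M^2 := by nlinarith
        have := mul_le_mul_of_nonneg_right hMM hsE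
        linarith
      calc (∫ x : ℝ, u x ^ 3 * deriv φ x)
          ≤ a * b + M * Real.sqrt E * E := hI3
        _ ≤ (1/4) * D + 2 * M^2 * E^((5:ℝ)/3) + 2 * M^2 * E^((3:ℝ)/2) := by linarith
        _ ≤ (1/4) * D + 2 * M^2 * (E^((5:ℝ)/3) + E^((3:ℝ)/2)) := by linarith
end

section
/- For every natural number r there exists a constant C > 0, depending only on r, such that for every real polynomial p of degree at most r and all real numbers a < b, sup_{x ∈ [a,b]} (p'(x))² ≤ (C / (b − a)³) ∫_a^b p(x)² dx. -/
open MeasureTheory intervalIntegral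

section PIIAux
open Polynomial

noncomputable def PIIQ (r : ℕ) (c : EuclideanSpace ℝ (Fin (r+1))) : ℝ :=
  ∑ i : Fin (r+1), ∑ j : Fin (r+1), c i * c j / ((i:ℕ) + (j:ℕ) + 1)

lemma PIIQ_eq (r : ℕ) (c : EuclideanSpace ℝ (Fin (r+1))) :
    PIIQ r c = ∫ t in (0:ℝ)..1, (∑ i : Fin (r+1), c i * t ^ (i:ℕ)) ^ 2 := by
  have h : ∀ t : ℝ, (∑ i : Fin (r+1), c i * t ^ (i:ℕ)) ^ 2
      = ∑ i : Fin (r+1), ∑ j : Fin (r+1), c i * c j * t ^ ((i:ℕ) + (j:ℕ)) := by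
    intro t
    rw [sq, Finset.sum_mul_sum]
    refine Finset.sum_congr rfl fun i _ => Finset.sum_congr rfl fun j _ => ?_
    rw [pow_add]; ring
  simp only [h]
  rw [intervalIntegral.integral_finset_sum]
  · refine Finset.sum_congr rfl fun i _ => ?_
    rw [intervalIntegral.integral_finset_sum]
    · refine Finset.sum_congr rfl fun j _ => ?_
      rw [intervalIntegral.integral_const_mul, integral_pow]
      push_cast; ring
    · intro j _; exact (Continuous.intervalIntegrable (by fun_prop) _ _)
  · intro i _
    exact (Continuous.intervalIntegrable (by fun_prop) _ _)

lemma PIIQ_cont (r : ℕ) : Continuous (PIIQ r) := by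
  unfold PIIQ
  fun_prop

lemma PIIQ_smul (r : ℕ) (s : ℝ) (c : EuclideanSpace ℝ (Fin (r+1))) :
    PIIQ r (s • c) = s ^ 2 * PIIQ r c := by
  unfold PIIQ
  rw [Finset.mul_sum]
  refine Finset.sum_congr rfl fun i _ => ?_
  rw [Finset.mul_sum]
  refine Finset.sum_congr rfl fun j _ => ?_
  simp only [PiLp.smul_apply, smul_eq_mul]
  ring

lemma PIIQ_pos (r : ℕ) (c : EuclideanSpace ℝ (Fin (r+1))) (hc : c ≠ 0) : 0 < PIIQ r c := by
  rw [PIIQ_eq]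
  set P : Polynomial ℝ := ∑ i : Fin (r+1), Polynomial.C (c i) * Polynomial.X ^ (i:ℕ) with hP
  have hev : ∀ t : ℝ, P.eval t = ∑ i : Fin (r+1), c i * t ^ (i:ℕ) := by
    intro t; simp [hP, Polynomial.eval_finset_sum]
  have hPne : P ≠ 0 := by
    intro h0
    apply hc
    ext i
    have : P.coeff (i:ℕ) = c i := by
      simp [hP, Polynomial.finset_sum_coeff, Polynomial.coeff_C_mul,
        Polynomial.coeff_X_pow, Fin.val_eq_val, Finset.sum_ite_eq]
    simp [h0] at this
    simp [← this]
  have hfin : Set.Finite {x : ℝ | P.IsRoot x} := Polynomial.finite_setOf_isRoot hPne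
  have : ¬ (Set.Icc (0:ℝ) 1 ⊆ {x : ℝ | P.IsRoot x}) := by
    intro hsub
    exact Set.Icc_infinite (by norm_num : (0:ℝ) < 1) (hfin.subset hsub)
  obtain ⟨x, hx, hxr⟩ := Set.not_subset.mp this
  refine intervalIntegral.integral_pos (by norm_num) ?_ (fun y _ => by positivity) ⟨x, hx, ?_⟩
  · fun_prop
  · have : (∑ i : Fin (r+1), c i * x ^ (i:ℕ)) ≠ 0 := by
      rw [← hev]; exact hxr
    positivity

lemma PIIQ_lower (r : ℕ) :
    ∃ m : ℝ, 0 < m ∧ ∀ c : EuclideanSpace ℝ (Fin (r+1)), m * ‖c‖ ^ 2 ≤ PIIQ r c := by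
  have hcomp : IsCompact (Metric.sphere (0 : EuclideanSpace ℝ (Fin (r+1))) 1) :=
    isCompact_sphere _ _
  have hne : (Metric.sphere (0 : EuclideanSpace ℝ (Fin (r+1))) 1).Nonempty :=
    NormedSpace.sphere_nonempty.mpr (by norm_num)
  obtain ⟨c₀, hc₀, hmin⟩ := hcomp.exists_isMinOn hne ((PIIQ_cont r).continuousOn)
  have hc₀norm : ‖c₀‖ = 1 := by simpa using hc₀
  have hc₀ne : c₀ ≠ 0 := by
    intro h; rw [h] at hc₀norm; simp at hc₀norm
  refine ⟨PIIQ r c₀, PIIQ_pos r c₀ hc₀ne, fun c => ?_⟩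
  rcases eq_or_ne c 0 with rfl | hc
  · simp [PIIQ]
  · have hnc : (0:ℝ) < ‖c‖ := norm_pos_iff.mpr hc
    have hunit : ‖c‖⁻¹ • c ∈ Metric.sphere (0 : EuclideanSpace ℝ (Fin (r+1))) 1 := by
      simp [norm_smul, abs_of_pos (inv_pos.mpr hnc), inv_mul_cancel₀ hnc.ne']
    have h1 : PIIQ r c₀ ≤ PIIQ r (‖c‖⁻¹ • c) := hmin hunit
    have h2 : PIIQ r (‖c‖⁻¹ • c) = (‖c‖⁻¹) ^ 2 * PIIQ r c := PIIQ_smul r _ c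
    rw [h2] at h1
    have := mul_le_mul_of_nonneg_left h1 (le_of_lt (pow_pos hnc 2))
    calc PIIQ r c₀ * ‖c‖ ^ 2 ≤ ‖c‖ ^ 2 * ((‖c‖⁻¹) ^ 2 * PIIQ r c) := by linarith
      _ = PIIQ r c := by field_simp

lemma PII_integral_nonneg (p : Polynomial ℝ) (a b : ℝ) (hab : a ≤ b) :
    0 ≤ ∫ t in a..b, (p.eval t) ^ 2 :=
  intervalIntegral.integral_nonneg hab (fun _ _ => sq_nonneg _)

lemma PII_coeff_bound (r : ℕ) :
    ∃ c1 : ℝ, 0 < c1 ∧ ∀ p : Polynomial ℝ, p.natDegree ≤ r → ∀ n : ℕ,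
      (p.coeff n) ^ 2 ≤ c1 * ∫ t in (0:ℝ)..1, (p.eval t) ^ 2 := by
  obtain ⟨m, hm, hlow⟩ := PIIQ_lower r
  refine ⟨m⁻¹, inv_pos.mpr hm, fun p hp n => ?_⟩
  set c : EuclideanSpace ℝ (Fin (r+1)) := WithLp.toLp 2 (fun i => p.coeff i) with hc
  have hev : ∀ t : ℝ, p.eval t = ∑ i : Fin (r+1), c i * t ^ (i:ℕ) := by
    intro t
    rw [Polynomial.eval_eq_sum_range' (Nat.lt_succ_of_le hp), Fin.sum_univ_eq_sum_range
      (fun i => p.coeff i * t ^ i)]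
  have hQ : PIIQ r c = ∫ t in (0:ℝ)..1, (p.eval t) ^ 2 := by
    rw [PIIQ_eq]
    congr 1
    ext t
    rw [hev t]
  have hlc := hlow c
  rw [hQ] at hlc
  have hnormsq : ‖c‖ ^ 2 = ∑ i : Fin (r+1), (c i) ^ 2 := by
    rw [EuclideanSpace.norm_eq, Real.sq_sqrt (Finset.sum_nonneg fun i _ => by positivity)]
    simp [sq_abs]
  rcases le_or_gt n r with hn | hn
  · have hi : (c ⟨n, Nat.lt_succ_of_le hn⟩) ^ 2 ≤ ‖c‖ ^ 2 := by
      rw [hnormsq]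
      exact Finset.single_le_sum (fun i _ => sq_nonneg (c i)) (Finset.mem_univ _)
    have : (p.coeff n) ^ 2 ≤ ‖c‖ ^ 2 := hi
    calc (p.coeff n) ^ 2 ≤ ‖c‖ ^ 2 := this
      _ = m⁻¹ * (m * ‖c‖ ^ 2) := by field_simp
      _ ≤ m⁻¹ * ∫ t in (0:ℝ)..1, (p.eval t) ^ 2 :=
          mul_le_mul_of_nonneg_left hlc (by positivity)
  · have : p.coeff n = 0 := Polynomial.coeff_eq_zero_of_natDegree_lt (lt_of_le_of_lt hp hn)
    rw [this]
    have hI := PII_integral_nonneg p 0 1 (by norm_num)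
    simpa using mul_nonneg (inv_pos.mpr hm).le hI

lemma PII_unit_bound (r : ℕ) :
    ∃ C0 : ℝ, 0 < C0 ∧ ∀ p : Polynomial ℝ, p.natDegree ≤ r → ∀ x ∈ Set.Icc (0:ℝ) 1,
      ((Polynomial.derivative p).eval x) ^ 2 ≤ C0 * ∫ t in (0:ℝ)..1, (p.eval t) ^ 2 := by
  obtain ⟨c1, hc1, hcoeff⟩ := PII_coeff_bound r
  refine ⟨((r:ℝ)+1)^4 * c1, by positivity, fun p hp x hx => ?_⟩
  set I := ∫ t in (0:ℝ)..1, (p.eval t) ^ 2 with hI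
  have hI0 : 0 ≤ I := PII_integral_nonneg p 0 1 (by norm_num)
  set M := Real.sqrt (c1 * I) with hM
  have hM0 : 0 ≤ M := Real.sqrt_nonneg _
  have hcoe : ∀ n : ℕ, |p.coeff n| ≤ M := by
    intro n
    rw [hM, ← Real.sqrt_sq_eq_abs]
    exact Real.sqrt_le_sqrt (hcoeff p hp n)
  have hdeg : (Polynomial.derivative p).natDegree < r + 1 :=
    Nat.lt_succ_of_le ((Polynomial.natDegree_derivative_le p).trans
      (le_trans (Nat.sub_le _ _) hp))
  have habs : |(Polynomial.derivative p).eval x| ≤ ((r:ℝ)+1)^2 * M := by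
    rw [Polynomial.eval_eq_sum_range' hdeg]
    refine (Finset.abs_sum_le_sum_abs _ _).trans ?_
    have hbd : ∀ i ∈ Finset.range (r+1),
        |(Polynomial.derivative p).coeff i * x ^ i| ≤ ((r:ℝ)+1) * M := by
      intro i hi
      rw [abs_mul, Polynomial.coeff_derivative, abs_mul]
      have h1 : |x ^ i| ≤ 1 := by
        rw [abs_pow, abs_of_nonneg hx.1]
        exact pow_le_one₀ hx.1 hx.2
      have h2 : |((i:ℝ)+1)| ≤ (r:ℝ)+1 := by
        rw [abs_of_nonneg (by positivity)]
        have := Finset.mem_range.mp hi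
        exact_mod_cast Nat.succ_le_succ (Nat.lt_succ_iff.mp this)
      calc |p.coeff (i+1)| * |((i:ℝ)+1)| * |x^i|
          ≤ M * (((r:ℝ)+1) * 1) := by
            refine mul_le_mul (mul_le_mul (hcoe _) h2 (abs_nonneg _) hM0) h1
              (abs_nonneg _) (by positivity) |>.trans_eq ?_
            ring
        _ = ((r:ℝ)+1) * M := by ring
    calc ∑ i ∈ Finset.range (r+1), |(Polynomial.derivative p).coeff i * x ^ i|
        ≤ ∑ _i ∈ Finset.range (r+1), (((r:ℝ)+1) * M) := Finset.sum_le_sum hbd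
      _ = ((r:ℝ)+1)^2 * M := by
          rw [Finset.sum_const, Finset.card_range, nsmul_eq_mul]
          push_cast; ring
  calc ((Polynomial.derivative p).eval x)^2
      = |(Polynomial.derivative p).eval x|^2 := (sq_abs _).symm
    _ ≤ (((r:ℝ)+1)^2 * M)^2 := pow_le_pow_left₀ (abs_nonneg _) habs 2
    _ = ((r:ℝ)+1)^4 * M^2 := by ring
    _ = ((r:ℝ)+1)^4 * (c1 * I) := by rw [hM, Real.sq_sqrt (by positivity)]
    _ = (((r:ℝ)+1)^4 * c1) * I := by ring

end PIIAux

/-- Combined inverse inequality for polynomials of degree at most `r`: there is a constant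
`C > 0` depending only on `r` such that for every such polynomial `p` and all `a < b`,
`sup_{x ∈ [a,b]} (p'(x))² ≤ (C/(b − a)³) ∫_a^b p(x)² dx`. -/
theorem polynomial_inverse_inequality_sup_deriv (r : ℕ) :
    ∃ C : ℝ, 0 < C ∧
      ∀ (p : Polynomial ℝ), p.natDegree ≤ r →
        ∀ (a b : ℝ), a < b →
          ∀ x ∈ Set.Icc a b,
            ((Polynomial.derivative p).eval x) ^ 2
              ≤ (C / (b - a) ^ 3) * ∫ t in a..b, (p.eval t) ^ 2 := by
  obtain ⟨C0, hC0, hbound⟩ := PII_unit_bound r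
  refine ⟨C0, hC0, fun p hp a b hab x hx => ?_⟩
  have hd : (0:ℝ) < b - a := sub_pos.mpr hab
  set L : Polynomial ℝ := Polynomial.C (b-a) * Polynomial.X + Polynomial.C a with hL
  set q : Polynomial ℝ := p.comp L with hq
  have hLdeg : L.natDegree = 1 := Polynomial.natDegree_linear hd.ne'
  have hqdeg : q.natDegree ≤ r := by
    rw [hq, Polynomial.natDegree_comp, hLdeg, mul_one]; exact hp
  have hLev : ∀ t : ℝ, L.eval t = (b-a) * t + a := by intro t; simp [hL]
  have hqev : ∀ t : ℝ, q.eval t = p.eval ((b-a)*t + a) := by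
    intro t; rw [hq, Polynomial.eval_comp, hLev]
  have hqder : Polynomial.derivative q
      = Polynomial.C (b-a) * (Polynomial.derivative p).comp L := by
    rw [hq, Polynomial.derivative_comp]
    congr 1
    simp [hL]
  set t := (x - a)/(b-a) with ht
  have htmem : t ∈ Set.Icc (0:ℝ) 1 := by
    constructor
    · exact div_nonneg (by linarith [hx.1]) hd.le
    · rw [ht, div_le_one hd]; linarith [hx.2]
  have hLt : L.eval t = x := by rw [hLev, ht]; field_simp; ring
  have hqd : (Polynomial.derivative q).eval t
      = (b-a) * (Polynomial.derivative p).eval x := by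
    rw [hqder]
    simp [Polynomial.eval_comp, hLt]
  have hsub : (∫ s in (0:ℝ)..1, (q.eval s)^2)
      = (b-a)⁻¹ * ∫ s in a..b, (p.eval s)^2 := by
    simp only [hqev]
    rw [intervalIntegral.integral_comp_mul_add (fun y => (p.eval y)^2) hd.ne' a]
    norm_num [smul_eq_mul]
  have key := hbound q hqdeg t htmem
  rw [hqd, hsub, mul_pow] at key
  calc ((Polynomial.derivative p).eval x)^2
      = ((b-a)^2)⁻¹ * ((b-a)^2 * ((Polynomial.derivative p).eval x)^2) := by
        field_simp
    _ ≤ ((b-a)^2)⁻¹ * (C0 * ((b-a)⁻¹ * ∫ s in a..b, (p.eval s)^2)) :=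
        mul_le_mul_of_nonneg_left key (by positivity)
    _ = C0 / (b-a)^3 * ∫ s in a..b, (p.eval s)^2 := by
        rw [div_eq_mul_inv, show (b-a)^3 = (b-a)^2 * (b-a) by ring, mul_inv]
        ring
end

section
/- For every real number R ≥ 1 there exists a constant C > 0, depending only on R, such that for every continuously differentiable function u : ℝ → ℝ and every x ∈ [−R+1, R−1], |u(x)| ≤ C ( ∫_{−R}^{R} ( u(t)² + (u'(t))² ) dt )^{1/2}. -/
open MeasureTheory intervalIntegral

/-- Local Sobolev (H¹ → L∞) embedding: for every `R ≥ 1` there is a constant `C > 0`,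
depending only on `R`, such that for every C¹ function `u : ℝ → ℝ` and every
`x ∈ [−R+1, R−1]`, `|u(x)| ≤ C (∫_{−R}^{R} (u² + (u')²))^{1/2}`. -/
theorem local_sobolev_embedding (R : ℝ) (hR : 1 ≤ R) :
    ∃ C : ℝ, 0 < C ∧
      ∀ (u : ℝ → ℝ), ContDiff ℝ 1 u →
        ∀ x ∈ Set.Icc (-R + 1) (R - 1),
          |u x| ≤ C * Real.sqrt (∫ t in (-R)..R, ((u t) ^ 2 + (deriv u t) ^ 2)) := by
  refine ⟨2, by norm_num, fun u hu x hx => ?_⟩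
  have hRR : (-R : ℝ) ≤ R := by linarith
  have hcu : Continuous u := hu.continuous
  have hcu' : Continuous (deriv u) := (hu.iterate_deriv' 0 1).continuous
  set I := ∫ t in (-R)..R, ((u t) ^ 2 + (deriv u t) ^ 2) with hI
  have hIsum : Continuous (fun t => (u t) ^ 2 + (deriv u t) ^ 2) :=
    (hcu.pow 2).add (hcu'.pow 2)
  have hInn : 0 ≤ I := integral_nonneg hRR (fun t _ => by positivity)
  -- x is in [-R, R]
  have hxI : x ∈ Set.Icc (-R) R := ⟨by linarith [hx.1], by linarith [hx.2]⟩
  -- min point y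
  obtain ⟨y, hyI, hymin⟩ := isCompact_Icc.exists_isMinOn (Set.nonempty_Icc.mpr hRR)
    ((hcu.pow 2).continuousOn : ContinuousOn (fun t => (u t)^2) (Set.Icc (-R) R))
  -- 2R u(y)^2 ≤ ∫ u^2
  have h1 : (2 * R) * (u y)^2 ≤ ∫ t in (-R)..R, (u t)^2 := by
    have := intervalIntegral.integral_mono_on hRR
      (intervalIntegrable_const : IntervalIntegrable (fun _ => (u y)^2) volume (-R) R)
      ((hcu.pow 2).intervalIntegrable _ _)
      (fun t ht => hymin ht)
    simp only [intervalIntegral.integral_const, smul_eq_mul, Pi.pow_apply] at this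
    nlinarith [this]
  -- FTC: u x ^2 - u y ^2 = ∫ 2 u u'
  have hderiv : ∀ t ∈ Set.uIcc y x, HasDerivAt (fun s => (u s)^2)
      (2 * u t * deriv u t) t := fun t _ => by
    have hd : HasDerivAt u (deriv u t) t := (hu.differentiable one_ne_zero t).hasDerivAt
    simpa [mul_comm, mul_assoc, mul_left_comm] using hd.fun_pow 2
  have hint2 : IntervalIntegrable (fun t => 2 * u t * deriv u t) volume y x :=
    ((continuous_const.mul hcu).mul hcu').intervalIntegrable _ _
  have hftc : (∫ t in y..x, 2 * u t * deriv u t) = (u x)^2 - (u y)^2 :=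
    intervalIntegral.integral_eq_sub_of_hasDerivAt hderiv hint2
  -- bound the integral
  have habs : ∀ t, |2 * u t * deriv u t| ≤ (u t)^2 + (deriv u t)^2 := fun t => by
    have h : |2 * u t * deriv u t| = 2 * |u t| * |deriv u t| := by
      rw [abs_mul, abs_mul]; simp [abs_of_nonneg]
    nlinarith [sq_nonneg (|u t| - |deriv u t|), sq_abs (u t), sq_abs (deriv u t)]
  have h2 : |∫ t in y..x, 2 * u t * deriv u t| ≤ I := by
    have key : ∀ a b : ℝ, a ≤ b → a ∈ Set.Icc (-R) R → b ∈ Set.Icc (-R) R →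
        |∫ t in a..b, 2 * u t * deriv u t| ≤ I := by
      intro a b hab ha hb
      calc |∫ t in a..b, 2 * u t * deriv u t|
          ≤ ∫ t in a..b, |2 * u t * deriv u t| :=
            intervalIntegral.abs_integral_le_integral_abs hab
        _ ≤ ∫ t in a..b, ((u t)^2 + (deriv u t)^2) :=
            intervalIntegral.integral_mono_on hab
              (((continuous_const.mul hcu).mul hcu').abs.intervalIntegrable _ _)
              (hIsum.intervalIntegrable _ _) (fun t _ => habs t)
        _ ≤ I := intervalIntegral.integral_mono_interval ha.1 hab hb.2
              (Filter.Eventually.of_forall (fun t => by positivity))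
              (hIsum.intervalIntegrable _ _)
    rcases le_total y x with h | h
    · exact key y x h hyI hxI
    · rw [intervalIntegral.integral_symm, abs_neg]
      exact key x y h hxI hyI
  -- combine
  have hI0 : (∫ t in (-R)..R, (u t)^2) ≤ I := by
    apply intervalIntegral.integral_mono_on hRR ((hcu.pow 2).intervalIntegrable _ _)
      (hIsum.intervalIntegrable _ _)
      (fun t _ => le_add_of_nonneg_right (by positivity))
  have hy2 : (u y)^2 ≤ I / 2 := by nlinarith
  have hx2 : (u x)^2 ≤ 4 * I := by
    have hb := (abs_le.mp h2).2
    linarith [hftc, hy2, hInn, hb]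
  calc |u x| = Real.sqrt ((u x)^2) := (Real.sqrt_sq_eq_abs _).symm
    _ ≤ Real.sqrt (4 * I) := Real.sqrt_le_sqrt hx2
    _ = 2 * Real.sqrt I := by
        rw [show (4 : ℝ) * I = 2^2 * I by ring, Real.sqrt_mul (by positivity), Real.sqrt_sq]
        norm_num
end
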